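/- Let k be an algebraically closed field of characteristic 0, let h ∈ k[x] be a monic polynomial of odd degree 2m+1 ≥ 3 such that h and its derivative h′ are coprime, and let A = k[x, y]/⟨y² − 2h(x)⟩ be the coordinate ring of the non-singular hyperelliptic curve y² = 2h(x), with x̄, ȳ the images of x, y in A. Then there is a unique derivation τ ∈ Der_k(A) with τ(x̄) = ȳ and τ(ȳ) equal to the image of h′(x), and Der_k(A) is a free A-module of rank 1 generated by τ: every μ ∈ Der_k(A) can be written uniquely as μ = f·τ with f ∈ A. -/

import Mathlib

set_option synthInstance.maxHeartbeats 1000000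
set_option maxHeartbeats 1000000

open Polynomial

namespace HypAux
variable {k : Type*} [Field k] (h : Polynomial k)

variable {k : Type*} [Field k] (h : Polynomial k)

noncomputable abbrev q : (Polynomial k)[X] := X ^ 2 - C (2 * h)

lemma q_monic : (q h).Monic := Polynomial.monic_X_pow_sub_C _ two_ne_zero
lemma q_degree : (q h).degree = 2 := Polynomial.degree_X_pow_sub_C (by norm_num) _

lemma root_sq : (AdjoinRoot.root (q h))^2 = AdjoinRoot.of _ (2*h) := by
  have := AdjoinRoot.eval₂_root (q h)
  simpa [sub_eq_zero] using this

lemma reprB (z : AdjoinRoot (q h)) :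
    ∃ p0 p1 : Polynomial k, z = AdjoinRoot.of _ p0 + AdjoinRoot.of _ p1 * AdjoinRoot.root _ := by
  obtain ⟨p, rfl⟩ := AdjoinRoot.mk_surjective z
  refine ⟨(p %ₘ q h).coeff 0, (p %ₘ q h).coeff 1, ?_⟩
  have h1 : AdjoinRoot.mk (q h) p = AdjoinRoot.mk (q h) (p %ₘ q h) := by
    rw [eq_comm, ← sub_eq_zero, ← map_sub, AdjoinRoot.mk_eq_zero,
      Polynomial.modByMonic_eq_sub_mul_div _ (q h)]
    exact ⟨-(p /ₘ q h), by ring⟩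
  have h2 : (p %ₘ q h) = C ((p %ₘ q h).coeff 1) * X + C ((p %ₘ q h).coeff 0) :=
    Polynomial.eq_X_add_C_of_degree_le_one (by
      have := Polynomial.degree_modByMonic_lt p (q_monic h)
      rw [q_degree] at this
      exact Order.le_of_lt_succ (by exact_mod_cast this))
  rw [h1]
  conv_lhs => rw [h2]
  rw [map_add, map_mul, AdjoinRoot.mk_C, AdjoinRoot.mk_C, AdjoinRoot.mk_X]
  ring

lemma uniqB {p0 p1 : Polynomial k}
    (hz : AdjoinRoot.of (q h) p0 + AdjoinRoot.of _ p1 * AdjoinRoot.root _ = 0) :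
    p0 = 0 ∧ p1 = 0 := by
  have : AdjoinRoot.mk (q h) (C p0 + C p1 * X) = 0 := by
    rw [map_add, map_mul, AdjoinRoot.mk_C, AdjoinRoot.mk_C, AdjoinRoot.mk_X]; exact hz
  rw [AdjoinRoot.mk_eq_zero] at this
  have h0 : C p0 + C p1 * X = 0 := by
    by_contra hne
    have hle := Polynomial.degree_le_of_dvd this hne
    rw [q_degree] at hle
    have hd : (C p0 + C p1 * X).degree ≤ 1 := by
      apply (Polynomial.degree_add_le _ _).trans
      simp only [sup_le_iff]
      exact ⟨Polynomial.degree_C_le.trans (by norm_num),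
        (Polynomial.degree_mul_le _ _).trans (by
          simpa using add_le_add Polynomial.degree_C_le
            (le_refl (Polynomial.X (R := Polynomial k)).degree))⟩
    exact absurd (hle.trans hd) (by norm_num)
  constructor
  · have := congrArg (fun r => Polynomial.coeff r 0) h0; simpa using this
  · have := congrArg (fun r => Polynomial.coeff r 1) h0; simpa using this

lemma eqB {p0 p1 r0 r1 : Polynomial k}
    (hz : AdjoinRoot.of (q h) p0 + AdjoinRoot.of _ p1 * AdjoinRoot.root _
        = AdjoinRoot.of (q h) r0 + AdjoinRoot.of _ r1 * AdjoinRoot.root _) :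
    p0 = r0 ∧ p1 = r1 := by
  have := uniqB h (p0 := p0 - r0) (p1 := p1 - r1) (by
    rw [map_sub, map_sub]; rw [← sub_eq_zero] at hz; rw [← hz]; ring)
  exact ⟨sub_eq_zero.1 this.1, sub_eq_zero.1 this.2⟩

lemma rootB_regular [CharZero k] (hne : h ≠ 0) {g : AdjoinRoot (q h)}
    (hg : g * AdjoinRoot.root (q h) = 0) : g = 0 := by
  obtain ⟨g0, g1, rfl⟩ := reprB h g
  have hnf : AdjoinRoot.of (q h) (2*h*g1) + AdjoinRoot.of _ g0 * AdjoinRoot.root _ = 0 := by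
    rw [← hg, show (2*h*g1) = (2*h)*g1 from rfl, map_mul, ← root_sq h]
    ring
  have hu := uniqB h hnf
  have hg1 : g1 = 0 := (mul_eq_zero.mp hu.1).resolve_left (mul_ne_zero (by norm_num) hne)
  simp [hu.2, hg1]

theorem coreB [CharZero k] (hne : h ≠ 0)
    (hcop : IsCoprime h (derivative h)) (a b : AdjoinRoot (q h))
    (hrel : AdjoinRoot.root (q h) * b = AdjoinRoot.of _ (derivative h) * a) :
    ∃! f : AdjoinRoot (q h), a = f * AdjoinRoot.root _ ∧ b = f * AdjoinRoot.of _ (derivative h) := by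
  obtain ⟨a0, a1, rfl⟩ := reprB h a
  obtain ⟨b0, b1, rfl⟩ := reprB h b
  set h' := derivative h with hh'
  have lhs_eq : AdjoinRoot.root (q h) * (AdjoinRoot.of _ b0 + AdjoinRoot.of _ b1 * AdjoinRoot.root _)
      = AdjoinRoot.of (q h) (2*h*b1) + AdjoinRoot.of _ b0 * AdjoinRoot.root _ := by
    rw [show (2*h*b1) = (2*h)*b1 from rfl, map_mul, ← root_sq h]; ring
  have rhs_eq : AdjoinRoot.of (q h) h' * (AdjoinRoot.of _ a0 + AdjoinRoot.of _ a1 * AdjoinRoot.root _)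
      = AdjoinRoot.of (q h) (h'*a0) + AdjoinRoot.of _ (h'*a1) * AdjoinRoot.root _ := by
    rw [map_mul, map_mul]; ring
  have hrel' := hrel
  rw [lhs_eq, rhs_eq] at hrel'
  obtain ⟨e1, e2⟩ := eqB h hrel'
  have hdvd : h ∣ a0 := hcop.dvd_of_dvd_mul_left ⟨2*b1, by linear_combination -e1⟩
  obtain ⟨c, hc⟩ := hdvd
  have hc2 : 2 * b1 = h' * c := by
    have hx : h * (2 * b1) = h * (h' * c) := by rw [hc] at e1; linear_combination e1
    exact mul_left_cancel₀ hne hx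
  have hhalf : (C (2⁻¹:k)) * 2 = (1:k[X]) := by
    have h2 : ((2:k[X])) = C (2:k) := (map_ofNat (C : k →+* k[X]) 2).symm
    rw [h2, ← C_mul]; norm_num
  have key : (C (2⁻¹:k) * c) * (2*h) = h * c := by linear_combination (c*h) * hhalf
  have hb1 : b1 = (C (2⁻¹:k) * c) * h' := by
    linear_combination (C (2⁻¹:k)) * hc2 - b1 * hhalf
  set f : AdjoinRoot (q h) :=
    AdjoinRoot.of _ a1 + AdjoinRoot.of _ (C (2⁻¹ : k) * c) * AdjoinRoot.root _ with hf
  have ha : AdjoinRoot.of (q h) a0 + AdjoinRoot.of _ a1 * AdjoinRoot.root _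
      = f * AdjoinRoot.root _ := by
    rw [hf, hc, ← key, map_mul, ← root_sq h]; ring
  have hb : AdjoinRoot.of (q h) b0 + AdjoinRoot.of _ b1 * AdjoinRoot.root _
      = f * AdjoinRoot.of _ h' := by
    rw [hf, e2, hb1, map_mul, map_mul]; ring
  refine ⟨f, ⟨ha, hb⟩, ?_⟩
  intro g hg
  have hz : (g - f) * AdjoinRoot.root (q h) = 0 := by
    rw [sub_mul, ← ha, ← hg.1, sub_self]
  have := rootB_regular h hne hz
  exact sub_eq_zero.mp this




noncomputable abbrev F : MvPolynomial (Fin 2) k :=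
  MvPolynomial.X 1 ^ 2 - 2 * Polynomial.aeval (MvPolynomial.X 0) h

noncomputable abbrev Iid : Ideal (MvPolynomial (Fin 2) k) := Ideal.span {F h}

lemma two_aeval (p : Polynomial k) :
    (2 : MvPolynomial (Fin 2) k) * Polynomial.aeval (MvPolynomial.X 0) p
      = Polynomial.aeval (MvPolynomial.X 0) (2 * p) := by
  rw [map_mul]
  congr 1
  exact (map_ofNat _ 2).symm

noncomputable def φ0 : MvPolynomial (Fin 2) k →ₐ[k] AdjoinRoot (q h) :=
  MvPolynomial.aeval ![algebraMap (Polynomial k) _ X, AdjoinRoot.root (q h)]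

lemma φ0_X0 : φ0 h (MvPolynomial.X 0) = algebraMap (Polynomial k) _ X := by
  simp [φ0]

lemma φ0_X1 : φ0 h (MvPolynomial.X 1) = AdjoinRoot.root (q h) := by
  simp [φ0]

lemma φ0_aeval (p : Polynomial k) :
    φ0 h (Polynomial.aeval (MvPolynomial.X 0) p) = AdjoinRoot.of (q h) p := by
  rw [← Polynomial.aeval_algHom_apply, φ0_X0,
    ← IsScalarTower.toAlgHom_apply k (Polynomial k) (AdjoinRoot (q h)),
    Polynomial.aeval_algHom_apply, Polynomial.aeval_X_left_apply,
    IsScalarTower.toAlgHom_apply, AdjoinRoot.algebraMap_eq]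

lemma root_sq' : (AdjoinRoot.root (q h))^2 = AdjoinRoot.of _ (2*h) := by
  have := AdjoinRoot.eval₂_root (q h)
  simpa [sub_eq_zero] using this

lemma φ0_F : φ0 h (F h) = 0 := by
  rw [F, two_aeval, map_sub, map_pow, φ0_X1, φ0_aeval, root_sq', sub_self]

noncomputable def e0 : (MvPolynomial (Fin 2) k ⧸ Iid h) →ₐ[k] AdjoinRoot (q h) :=
  Ideal.Quotient.liftₐ _ (φ0 h) (by
    intro a ha
    rw [Iid, Ideal.mem_span_singleton] at ha
    obtain ⟨c, rfl⟩ := ha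
    rw [map_mul, φ0_F, zero_mul])

lemma e0_mk (p : MvPolynomial (Fin 2) k) :
    e0 h (Ideal.Quotient.mk (Iid h) p) = φ0 h p := by
  simp [e0, Ideal.Quotient.liftₐ_apply]
  rfl

lemma mk_aeval (p : Polynomial k) :
    Ideal.Quotient.mk (Iid h) (Polynomial.aeval (MvPolynomial.X 0) p)
      = Polynomial.aeval (Ideal.Quotient.mk (Iid h) (MvPolynomial.X 0)) p := by
  rw [← Ideal.Quotient.mkₐ_eq_mk (R₁ := k), Polynomial.aeval_algHom_apply]

lemma q_rel : (Ideal.Quotient.mk (Iid h) (MvPolynomial.X 1))^2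
    = Polynomial.aeval (Ideal.Quotient.mk (Iid h) (MvPolynomial.X 0)) (2*h) := by
  rw [← mk_aeval, ← two_aeval, ← map_pow, ← sub_eq_zero, ← map_sub,
    Ideal.Quotient.eq_zero_iff_mem]
  exact Ideal.subset_span rfl

noncomputable def χ : AdjoinRoot (q h) →+* (MvPolynomial (Fin 2) k ⧸ Iid h) :=
  AdjoinRoot.lift
    ((Polynomial.aeval (Ideal.Quotient.mk (Iid h) (MvPolynomial.X 0)) : Polynomial k →ₐ[k] _) :
      Polynomial k →+* _)
    (Ideal.Quotient.mk (Iid h) (MvPolynomial.X 1)) (by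
      rw [Polynomial.eval₂_sub, Polynomial.eval₂_pow, Polynomial.eval₂_X, Polynomial.eval₂_C]
      rw [sub_eq_zero]
      exact q_rel h)

lemma χ_of (p : Polynomial k) : χ h (AdjoinRoot.of (q h) p)
    = Polynomial.aeval (Ideal.Quotient.mk (Iid h) (MvPolynomial.X 0)) p :=
  AdjoinRoot.lift_of _

lemma χ_root : χ h (AdjoinRoot.root (q h)) = Ideal.Quotient.mk (Iid h) (MvPolynomial.X 1) :=
  AdjoinRoot.lift_root _

lemma χ_e0 (a : MvPolynomial (Fin 2) k ⧸ Iid h) : χ h (e0 h a) = a := by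
  obtain ⟨p, rfl⟩ := Ideal.Quotient.mk_surjective a
  rw [e0_mk]
  have key : (χ h).comp ((φ0 h).toRingHom) = (Ideal.Quotient.mk (Iid h)) := by
    apply MvPolynomial.ringHom_ext
    · intro c
      show χ h (φ0 h (MvPolynomial.C c)) = _
      rw [show (MvPolynomial.C c : MvPolynomial (Fin 2) k) = algebraMap k _ c from rfl,
        AlgHom.commutes, AdjoinRoot.algebraMap_eq' k, RingHom.comp_apply, χ_of]
      rw [show ((algebraMap k k[X]) c) = Polynomial.C c from rfl, Polynomial.aeval_C]
      exact ((Ideal.Quotient.mkₐ k (Iid h)).commutes c).symm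
    · intro i
      fin_cases i
      · show χ h (φ0 h (MvPolynomial.X 0)) = _
        rw [φ0_X0, AdjoinRoot.algebraMap_eq, χ_of]
        simp
      · show χ h (φ0 h (MvPolynomial.X 1)) = _
        rw [φ0_X1, χ_root]
        rfl
  exact congrFun (congrArg DFunLike.coe key) p

lemma e0_χ (b : AdjoinRoot (q h)) : e0 h (χ h b) = b := by
  obtain ⟨p, rfl⟩ := AdjoinRoot.mk_surjective b
  have h1 : χ h (AdjoinRoot.mk (q h) p) = Polynomial.eval₂
      ((Polynomial.aeval (Ideal.Quotient.mk (Iid h) (MvPolynomial.X 0)) : Polynomial k →ₐ[k] _) :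
        Polynomial k →+* _)
      (Ideal.Quotient.mk (Iid h) (MvPolynomial.X 1)) p := AdjoinRoot.lift_mk _ _
  have h2 := Polynomial.hom_eval₂ p
      ((Polynomial.aeval (Ideal.Quotient.mk (Iid h) (MvPolynomial.X 0)) : Polynomial k →ₐ[k] _) :
        Polynomial k →+* _)
      ((e0 h : (MvPolynomial (Fin 2) k ⧸ Iid h) →+* AdjoinRoot (q h)))
      (Ideal.Quotient.mk (Iid h) (MvPolynomial.X 1))
  have hcomp : ((e0 h : (MvPolynomial (Fin 2) k ⧸ Iid h) →+* AdjoinRoot (q h))).comp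
      ((Polynomial.aeval (Ideal.Quotient.mk (Iid h) (MvPolynomial.X 0)) : Polynomial k →ₐ[k] _) :
        Polynomial k →+* _) = AdjoinRoot.of (q h) := by
    refine RingHom.ext fun p' => ?_
    show e0 h (Polynomial.aeval (Ideal.Quotient.mk (Iid h) (MvPolynomial.X 0)) p') = _
    rw [← mk_aeval, e0_mk, φ0_aeval]
  have hy : (e0 h : (MvPolynomial (Fin 2) k ⧸ Iid h) →+* AdjoinRoot (q h))
      (Ideal.Quotient.mk (Iid h) (MvPolynomial.X 1)) = AdjoinRoot.root (q h) := by
    show e0 h _ = _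
    rw [e0_mk, φ0_X1]
  rw [hcomp, hy] at h2
  show (e0 h : (MvPolynomial (Fin 2) k ⧸ Iid h) →+* AdjoinRoot (q h)) (χ h (AdjoinRoot.mk (q h) p)) = _
  rw [h1, h2, ← AdjoinRoot.algebraMap_eq, ← Polynomial.aeval_def, AdjoinRoot.aeval_eq]

noncomputable def eqv : (MvPolynomial (Fin 2) k ⧸ Iid h) ≃ₐ[k] AdjoinRoot (q h) :=
  AlgEquiv.ofAlgHom (e0 h)
    { toRingHom := χ h
      commutes' := fun c => by
        show χ h (algebraMap k _ c) = algebraMap k _ c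
        rw [AdjoinRoot.algebraMap_eq' k, RingHom.comp_apply, χ_of]
        simp }
    (AlgHom.ext fun b => e0_χ h b) (AlgHom.ext fun a => χ_e0 h a)

lemma eqv_mk_aeval (p : Polynomial k) :
    eqv h (Ideal.Quotient.mk (Iid h) (Polynomial.aeval (MvPolynomial.X 0) p))
      = AdjoinRoot.of (q h) p := by
  have : eqv h (Ideal.Quotient.mk (Iid h) (Polynomial.aeval (MvPolynomial.X 0) p))
      = e0 h (Ideal.Quotient.mk (Iid h) (Polynomial.aeval (MvPolynomial.X 0) p)) := rfl
  rw [this, e0_mk, φ0_aeval]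

lemma eqv_y : eqv h (Ideal.Quotient.mk (Iid h) (MvPolynomial.X 1)) = AdjoinRoot.root (q h) := by
  have : eqv h (Ideal.Quotient.mk (Iid h) (MvPolynomial.X 1))
      = e0 h (Ideal.Quotient.mk (Iid h) (MvPolynomial.X 1)) := rfl
  rw [this, e0_mk, φ0_X1]





noncomputable def D : Derivation k (MvPolynomial (Fin 2) k) (MvPolynomial (Fin 2) k) :=
  MvPolynomial.mkDerivation k ![MvPolynomial.X 1, Polynomial.aeval (MvPolynomial.X 0) (derivative h)]

lemma D_X0 : D h (MvPolynomial.X 0) = MvPolynomial.X 1 := by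
  rw [D, MvPolynomial.mkDerivation_X]; rfl

lemma D_X1 : D h (MvPolynomial.X 1) = Polynomial.aeval (MvPolynomial.X 0) (derivative h) := by
  rw [D, MvPolynomial.mkDerivation_X]; rfl

lemma D_F : D h (F h) = 0 := by
  have h2 : ((2 : MvPolynomial (Fin 2) k)) = ((2:ℕ) : MvPolynomial (Fin 2) k) := by norm_num
  rw [F, map_sub, sq, Derivation.leibniz, Derivation.leibniz, Derivation.map_aeval, D_X0, D_X1,
    h2, Derivation.map_natCast]
  simp only [smul_eq_mul]
  ring

lemma D_mem (g : MvPolynomial (Fin 2) k) (hg : g ∈ Iid h) :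
    Ideal.Quotient.mk (Iid h) (D h g) = 0 := by
  rw [Iid, Ideal.mem_span_singleton] at hg
  obtain ⟨c, rfl⟩ := hg
  rw [Derivation.leibniz, D_F, smul_zero, add_zero, smul_eq_mul, map_mul]
  have hF0 : Ideal.Quotient.mk (Iid h) (F h) = 0 :=
    Ideal.Quotient.eq_zero_iff_mem.2 (Ideal.subset_span rfl)
  rw [hF0, zero_mul]

noncomputable def τlin : (MvPolynomial (Fin 2) k ⧸ Iid h) →ₗ[k] (MvPolynomial (Fin 2) k ⧸ Iid h) :=
  (Submodule.liftQ ((Iid h).restrictScalars k)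
      ((Ideal.Quotient.mkₐ k (Iid h)).toLinearMap ∘ₗ (D h).toLinearMap)
      (fun g hg => D_mem h g hg)) ∘ₗ
    (Submodule.Quotient.restrictScalarsEquiv k (Iid h)).symm.toLinearMap

lemma τlin_mk (g : MvPolynomial (Fin 2) k) :
    τlin h (Ideal.Quotient.mk (Iid h) g) = Ideal.Quotient.mk (Iid h) (D h g) := by
  rw [τlin]
  have : (Ideal.Quotient.mk (Iid h) g) = Submodule.Quotient.mk g := rfl
  rw [LinearMap.comp_apply, this, LinearEquiv.coe_toLinearMap,
    Submodule.Quotient.restrictScalarsEquiv_symm_mk]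
  rfl

noncomputable def τ : Derivation k (MvPolynomial (Fin 2) k ⧸ Iid h) (MvPolynomial (Fin 2) k ⧸ Iid h) :=
  Derivation.mk' (τlin h) (by
    intro a b
    obtain ⟨x, rfl⟩ := Ideal.Quotient.mk_surjective a
    obtain ⟨y, rfl⟩ := Ideal.Quotient.mk_surjective b
    rw [← map_mul, τlin_mk, Derivation.leibniz, smul_eq_mul, smul_eq_mul, map_add, map_mul,
      map_mul, τlin_mk, τlin_mk, smul_eq_mul, smul_eq_mul])

lemma τ_mk (g : MvPolynomial (Fin 2) k) :
    τ h (Ideal.Quotient.mk (Iid h) g) = Ideal.Quotient.mk (Iid h) (D h g) := τlin_mk h g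

lemma adjoin_top :
    Algebra.adjoin k {Ideal.Quotient.mk (Iid h) (MvPolynomial.X 0),
      Ideal.Quotient.mk (Iid h) (MvPolynomial.X 1)} = ⊤ := by
  have h1 : Algebra.adjoin k (Set.range (fun i : Fin 2 =>
      Ideal.Quotient.mk (Iid h) (MvPolynomial.X i))) = ⊤ := by
    have : (Set.range (fun i : Fin 2 => Ideal.Quotient.mk (Iid h) (MvPolynomial.X i)))
        = (Ideal.Quotient.mkₐ k (Iid h)) '' (Set.range (MvPolynomial.X : Fin 2 → _)) := by
      rw [← Set.range_comp]; rfl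
    rw [this, Algebra.adjoin_image, MvPolynomial.adjoin_range_X, Algebra.map_top,
      AlgHom.range_eq_top]
    exact Ideal.Quotient.mkₐ_surjective k _
  rw [← h1]
  congr 1
  ext z
  simp only [Set.mem_insert_iff, Set.mem_singleton_iff, Set.mem_range]
  constructor
  · rintro (rfl | rfl)
    exacts [⟨0, rfl⟩, ⟨1, rfl⟩]
  · rintro ⟨i, rfl⟩
    fin_cases i
    · left; rfl
    · right; rfl

lemma derivation_ext {μ ν : Derivation k (MvPolynomial (Fin 2) k ⧸ Iid h)
    (MvPolynomial (Fin 2) k ⧸ Iid h)}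
    (h0 : μ (Ideal.Quotient.mk (Iid h) (MvPolynomial.X 0))
        = ν (Ideal.Quotient.mk (Iid h) (MvPolynomial.X 0)))
    (h1 : μ (Ideal.Quotient.mk (Iid h) (MvPolynomial.X 1))
        = ν (Ideal.Quotient.mk (Iid h) (MvPolynomial.X 1))) : μ = ν := by
  refine Derivation.ext_of_adjoin_eq_top _ (adjoin_top h) ?_
  rintro z (rfl | rfl)
  · exact h0
  · exact h1


end HypAux

set_option synthInstance.maxHeartbeats 400000

/-- For a non-singular hyperelliptic curve `y² = 2h(x)` (with `h` monic of odd degree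
`2m+1 ≥ 3` and `gcd(h, h') = 1`), the Lie algebra of vector fields on the curve is a free
module of rank 1 over the coordinate ring, generated by `τ = y ∂/∂x + h'(x) ∂/∂y`. -/
theorem hyperelliptic_derivations_free_of_rank_one
    (k : Type*) [Field k] [IsAlgClosed k] [CharZero k]
    (m : ℕ) (hm : 1 ≤ m)
    (h : Polynomial k) (hmonic : h.Monic) (hdeg : h.natDegree = 2 * m + 1)
    (hcop : IsCoprime h (Polynomial.derivative h))
    (I : Ideal (MvPolynomial (Fin 2) k))
    (hI : I = Ideal.span {MvPolynomial.X 1 ^ 2 -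
      2 * Polynomial.aeval (MvPolynomial.X 0) h}) :
    ∃ τ : Derivation k (MvPolynomial (Fin 2) k ⧸ I) (MvPolynomial (Fin 2) k ⧸ I),
      (τ (Ideal.Quotient.mk I (MvPolynomial.X 0)) = Ideal.Quotient.mk I (MvPolynomial.X 1) ∧
        τ (Ideal.Quotient.mk I (MvPolynomial.X 1)) =
          Ideal.Quotient.mk I (Polynomial.aeval (MvPolynomial.X 0) (Polynomial.derivative h))) ∧
      (∀ τ' : Derivation k (MvPolynomial (Fin 2) k ⧸ I) (MvPolynomial (Fin 2) k ⧸ I),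
        (τ' (Ideal.Quotient.mk I (MvPolynomial.X 0)) = Ideal.Quotient.mk I (MvPolynomial.X 1) ∧
          τ' (Ideal.Quotient.mk I (MvPolynomial.X 1)) =
            Ideal.Quotient.mk I (Polynomial.aeval (MvPolynomial.X 0) (Polynomial.derivative h)))
        → τ' = τ) ∧
      ∀ μ : Derivation k (MvPolynomial (Fin 2) k ⧸ I) (MvPolynomial (Fin 2) k ⧸ I),
        ∃! f : MvPolynomial (Fin 2) k ⧸ I, μ = f • τ := by
  subst hI
  have hne : h ≠ 0 := hmonic.ne_zero
  refine ⟨HypAux.τ h, ⟨?_, ?_⟩, ?_, ?_⟩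
  · rw [HypAux.τ_mk, HypAux.D_X0]
  · rw [HypAux.τ_mk, HypAux.D_X1]
  · intro τ' hτ'
    refine HypAux.derivation_ext h ?_ ?_
    · rw [hτ'.1, HypAux.τ_mk, HypAux.D_X0]
    · rw [hτ'.2, HypAux.τ_mk, HypAux.D_X1]
  · intro μ
    set xA := Ideal.Quotient.mk (HypAux.Iid h) (MvPolynomial.X 0) with hxA
    set yA := Ideal.Quotient.mk (HypAux.Iid h) (MvPolynomial.X 1) with hyA
    set h'A := Ideal.Quotient.mk (HypAux.Iid h)
      (Polynomial.aeval (MvPolynomial.X 0) (Polynomial.derivative h)) with hh'A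
    set a := μ xA with ha
    set b := μ yA with hb
    have hq' : yA * yA = Polynomial.aeval xA (2*h) := by
      rw [hyA, hxA, ← sq]; exact HypAux.q_rel h
    have hstep : 2*(yA*b) = 2*(h'A * a) := by
      have h1 := congrArg μ hq'
      rw [Derivation.leibniz, Derivation.map_aeval] at h1
      have hd : Polynomial.derivative (2*h : Polynomial k) = 2 * Polynomial.derivative h := by
        simp
      rw [hd] at h1
      have h3 : Polynomial.aeval xA (2 * Polynomial.derivative h) = 2 * h'A := by
        rw [map_mul, hh'A, HypAux.mk_aeval]
        congr 1
        exact map_ofNat _ 2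
      rw [h3] at h1
      simp only [smul_eq_mul] at h1
      linear_combination h1
    have hu : (algebraMap k (MvPolynomial (Fin 2) k ⧸ HypAux.Iid h) (2⁻¹:k)) * 2 = 1 := by
      rw [← map_ofNat (algebraMap k (MvPolynomial (Fin 2) k ⧸ HypAux.Iid h)) 2, ← map_mul]
      norm_num
    have hrel : yA * b = h'A * a := by
      linear_combination (algebraMap k (MvPolynomial (Fin 2) k ⧸ HypAux.Iid h) (2⁻¹:k)) * hstep
        - ((yA*b) - (h'A*a)) * hu
    have hB : AdjoinRoot.root (HypAux.q h) * (HypAux.eqv h b)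
        = AdjoinRoot.of _ (Polynomial.derivative h) * (HypAux.eqv h a) := by
      have h1 := congrArg (HypAux.eqv h) hrel
      rw [map_mul, map_mul, hyA, HypAux.eqv_y, hh'A, HypAux.eqv_mk_aeval] at h1
      exact h1
    obtain ⟨g, ⟨hga, hgb⟩, hguniq⟩ :=
      HypAux.coreB h hne hcop (HypAux.eqv h a) (HypAux.eqv h b) hB
    refine ⟨(HypAux.eqv h).symm g, ?_, ?_⟩
    · refine HypAux.derivation_ext h ?_ ?_
      · rw [Derivation.smul_apply, HypAux.τ_mk, HypAux.D_X0, smul_eq_mul]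
        apply (HypAux.eqv h).injective
        rw [map_mul, AlgEquiv.apply_symm_apply, ← hyA, HypAux.eqv_y]  -- may need tweaks
        exact hga
      · rw [Derivation.smul_apply, HypAux.τ_mk, HypAux.D_X1, smul_eq_mul]
        apply (HypAux.eqv h).injective
        rw [map_mul, AlgEquiv.apply_symm_apply, ← hh'A, HypAux.eqv_mk_aeval]
        exact hgb
    · intro f' hf'
      have h₁ : a = f' * yA := by
        rw [ha, hf', Derivation.smul_apply, HypAux.τ_mk, HypAux.D_X0, smul_eq_mul, hyA]
      have h₂ : b = f' * h'A := by
        rw [hb, hf', Derivation.smul_apply, HypAux.τ_mk, HypAux.D_X1, smul_eq_mul, hh'A]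
      have hf'g : HypAux.eqv h f' = g := by
        apply hguniq
        constructor
        · rw [h₁, map_mul, hyA, HypAux.eqv_y]
        · rw [h₂, map_mul, hh'A, HypAux.eqv_mk_aeval]
      rw [← hf'g, AlgEquiv.symm_apply_apply]
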